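/- Let Q = diag(q_1^2,…,q_n^2) and A the n×n nilpotent superdiagonal matrix. Then for any 1 ≤ i, j ≤ n and t ≥ 0, ∫_0^t e_i^T e^{A(t−s)} Q (e_j^T e^{A(t−s)})^T ds = Σ_{m=max{i,j}}^{n} q_m^2 · t^{2m−i−j+1} / ((m−i)! (m−j)! (2m−i−j+1)). -/

import Mathlib

open Finset intervalIntegral

/-- The `n × n` nilpotent matrix with ones on the superdiagonal. -/
def superdiag (n : ℕ) : Matrix (Fin n) (Fin n) ℝ :=
  Matrix.of fun i j => if (i : ℕ) + 1 = (j : ℕ) then 1 else 0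

lemma superdiag_pow (n p : ℕ) (i k : Fin n) :
    (superdiag n ^ p) i k = if (i : ℕ) + p = (k : ℕ) then 1 else 0 := by
  induction p generalizing i with
  | zero => simp [Matrix.one_apply, Fin.ext_iff]
  | succ p ih =>
    rw [pow_succ', Matrix.mul_apply]
    simp only [ih]
    by_cases h : (i : ℕ) + 1 < n
    · rw [Finset.sum_eq_single ⟨(i : ℕ) + 1, h⟩]
      · rw [show superdiag n i ⟨(i:ℕ)+1, h⟩ = 1 by simp [superdiag], one_mul]
        rw [show ((⟨(i:ℕ)+1, h⟩ : Fin n) : ℕ) + p = (i:ℕ) + (p+1) by simp; omega]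
      · intro l _ hl
        rw [show superdiag n i l = 0 by simp [superdiag]; exact fun hc => hl (Fin.ext hc.symm),
          zero_mul]
      · simp
    · rw [Finset.sum_eq_zero, if_neg (by omega)]
      intro l _
      rw [show superdiag n i l = 0 by simp [superdiag]; omega, zero_mul]

lemma exp_superdiag_apply (n : ℕ) (c : ℝ) (i k : Fin n) :
    (NormedSpace.exp (c • superdiag n)) i k =
      if (i : ℕ) ≤ (k : ℕ) then c ^ ((k : ℕ) - (i : ℕ)) / (((k : ℕ) - (i : ℕ)).factorial : ℝ) else 0 := by
  have hz : ∀ p ∉ Finset.range n, ((p.factorial : ℝ)⁻¹) • (c • superdiag n) ^ p = 0 := by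
    intro p hp
    simp only [Finset.mem_range, not_lt] at hp
    ext a b
    rw [smul_pow, Matrix.smul_apply, Matrix.smul_apply, superdiag_pow, if_neg (by omega)]
    simp
  simp only [NormedSpace.exp_eq_tsum ℝ]
  rw [tsum_eq_sum hz, Matrix.sum_apply]
  simp only [Matrix.smul_apply, smul_pow, superdiag_pow, smul_eq_mul, mul_ite, mul_one, mul_zero]
  by_cases hik : (i : ℕ) ≤ (k : ℕ)
  · rw [Finset.sum_eq_single ((k : ℕ) - (i : ℕ))]
    · rw [if_pos (by omega), if_pos hik, div_eq_inv_mul]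
    · intro p _ hp
      rw [if_neg (by omega)]
    · intro h
      exact absurd (Finset.mem_range.2 (by omega)) h
  · rw [Finset.sum_eq_zero, if_neg hik]
    intro p _
    rw [if_neg (by omega)]

theorem stmt_11 (n : ℕ) (q : Fin n → ℝ) (i j : Fin n) (t : ℝ) (ht : 0 ≤ t) :
    ∫ s in (0 : ℝ)..t,
        ∑ k : Fin n,
          (NormedSpace.exp ((t - s) • superdiag n)) i k * (q k ^ 2) *
            (NormedSpace.exp ((t - s) • superdiag n)) j k =
      ∑ m ∈ Finset.univ.filter (fun m : Fin n => i ≤ m ∧ j ≤ m),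
        q m ^ 2 * t ^ (2 * (m : ℕ) - (i : ℕ) - (j : ℕ) + 1) /
          ((((m : ℕ) - (i : ℕ)).factorial : ℝ) * (((m : ℕ) - (j : ℕ)).factorial : ℝ) *
            ((2 * (m : ℕ) - (i : ℕ) - (j : ℕ) + 1 : ℕ) : ℝ)) := by
  have key : ∀ s : ℝ,
      (∑ k : Fin n,
          (NormedSpace.exp ((t - s) • superdiag n)) i k * (q k ^ 2) *
            (NormedSpace.exp ((t - s) • superdiag n)) j k) =
      ∑ k : Fin n, if i ≤ k ∧ j ≤ k then
          q k ^ 2 / ((((k : ℕ) - (i : ℕ)).factorial : ℝ) * (((k : ℕ) - (j : ℕ)).factorial : ℝ)) *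
            (t - s) ^ (2 * (k : ℕ) - (i : ℕ) - (j : ℕ)) else 0 := by
    intro s
    refine Finset.sum_congr rfl fun k _ => ?_
    rw [exp_superdiag_apply, exp_superdiag_apply]
    by_cases h1 : (i : ℕ) ≤ (k : ℕ)
    · by_cases h2 : (j : ℕ) ≤ (k : ℕ)
      · rw [if_pos h1, if_pos h2, if_pos ⟨Fin.le_def.2 h1, Fin.le_def.2 h2⟩,
          show 2 * (k : ℕ) - (i : ℕ) - (j : ℕ) = ((k : ℕ) - (i : ℕ)) + ((k : ℕ) - (j : ℕ)) from by
            omega, pow_add]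
        ring
      · rw [if_neg h2,
          if_neg (show ¬(i ≤ k ∧ j ≤ k) from fun hc => h2 (Fin.le_def.1 hc.2)), mul_zero]
    · rw [if_neg h1,
        if_neg (show ¬(i ≤ k ∧ j ≤ k) from fun hc => h1 (Fin.le_def.1 hc.1)), zero_mul, zero_mul]
  simp only [key]
  rw [intervalIntegral.integral_finset_sum]
  · rw [Finset.sum_filter]
    refine Finset.sum_congr rfl fun k _ => ?_
    by_cases h : i ≤ k ∧ j ≤ k
    · simp only [if_pos h]
      rw [intervalIntegral.integral_const_mul]
      have hI : (∫ s in (0:ℝ)..t, (t - s) ^ (2 * (k : ℕ) - (i : ℕ) - (j : ℕ))) =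
          t ^ (2 * (k : ℕ) - (i : ℕ) - (j : ℕ) + 1) /
            ((2 * (k : ℕ) - (i : ℕ) - (j : ℕ) : ℕ) + 1 : ℝ) := by
        rw [intervalIntegral.integral_comp_sub_left
          (fun u => u ^ (2 * (k : ℕ) - (i : ℕ) - (j : ℕ))) t]
        simp [integral_pow]
      rw [hI]
      have f1 : ((((k : ℕ) - (i : ℕ)).factorial : ℝ)) ≠ 0 := by
        exact_mod_cast (Nat.factorial_pos _).ne'
      have f2 : ((((k : ℕ) - (j : ℕ)).factorial : ℝ)) ≠ 0 := by
        exact_mod_cast (Nat.factorial_pos _).ne'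
      have f3 : ((2 * (k : ℕ) - (i : ℕ) - (j : ℕ) : ℕ) + 1 : ℝ) ≠ 0 := by positivity
      push_cast
      field_simp
    · simp only [if_neg h, intervalIntegral.integral_zero]
  · intro k _
    apply Continuous.intervalIntegrable
    by_cases h : i ≤ k ∧ j ≤ k
    · simp only [if_pos h]; fun_prop
    · simp only [if_neg h]; fun_prop
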